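/- arXiv:1510.06282 — 4 statements merged into one kernel-verified Lean document; each statement's English description precedes it below -/
import Mathlib

section
/- For r ∈ (0, 1] and φ ∈ (0, π), the series ∑_{k=1}^∞ (-1)^{k+1} r^k cos(kφ)/(k+2) is strictly less than ∑_{k=1}^∞ (-1)^{k+1} r^k/(k+2). -/
open Real Filter Topology

noncomputable def gfun (r φ t : ℝ) : ℝ :=
  t * ((r*t)/(1+r*t) - ((r*t)*Real.cos φ + (r*t)^2)/(1+2*(r*t)*Real.cos φ+(r*t)^2))

lemma term_eq (r φ t : ℝ) (k : ℕ) :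
    (-1:ℝ)^k * r^(k+1) * (1 - Real.cos ((k+1)*φ)) * t^(k+2)
    = t * (-((-(r*t))^(k+1)) + ((((-(r*t) : ℝ)) * Complex.exp (φ * Complex.I))^(k+1)).re) := by
  have h1 : ((((-(r*t)) : ℝ) : ℂ) * Complex.exp (↑φ * Complex.I))^(k+1)
      = ((((-(r*t))^(k+1) : ℝ)) : ℂ) * Complex.exp (↑(((k:ℝ)+1)*φ) * Complex.I) := by
    rw [mul_pow, ← Complex.exp_nat_mul]
    push_cast
    ring_nf
  rw [h1, Complex.re_ofReal_mul, Complex.exp_ofReal_mul_I_re]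
  have h2 : ((-(r*t))^(k+1) : ℝ) = -((-1:ℝ)^k * r^(k+1) * t^(k+1)) := by
    rw [neg_pow]; ring_nf
  rw [h2]
  push_cast
  ring


lemma aux_hasSum (r φ t : ℝ) (hx0 : 0 < r*t) (hx1 : r*t < 1) :
    HasSum (fun k : ℕ => (-1:ℝ)^k * r^(k+1) * (1 - Real.cos ((k+1)*φ)) * t^(k+2))
      (gfun r φ t) := by
  set x := r*t with hxdef
  set y : ℝ := -x with hydef
  set w : ℂ := ((y:ℝ) : ℂ) * Complex.exp (↑φ * Complex.I) with hwdef
  have hwnorm : ‖w‖ < 1 := by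
    rw [hwdef]
    rw [norm_mul, Complex.norm_exp_ofReal_mul_I]
    simp [hydef, abs_of_pos hx0]
    exact hx1
  have hynorm : ‖y‖ < 1 := by
    rw [Real.norm_eq_abs, hydef, abs_neg, abs_of_pos hx0]; exact hx1
  have hw : HasSum (fun k : ℕ => w^(k+1)) (w * (1-w)⁻¹) := by
    have := (hasSum_geometric_of_norm_lt_one hwnorm).mul_left w
    simpa only [pow_succ'] using this
  have hy : HasSum (fun k : ℕ => y^(k+1)) (y * (1-y)⁻¹) := by
    have := (hasSum_geometric_of_norm_lt_one hynorm).mul_left y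
    simpa only [pow_succ'] using this
  have hre : HasSum (fun k : ℕ => (w^(k+1)).re) ((w * (1-w)⁻¹).re) := Complex.hasSum_re hw
  have comb := ((hy.neg.add hre).mul_left t)
  have heq : (fun k : ℕ => t * (-(y^(k+1)) + (w^(k+1)).re))
      = fun k : ℕ => (-1:ℝ)^k * r^(k+1) * (1 - Real.cos ((k+1)*φ)) * t^(k+2) := by
    funext k
    rw [term_eq r φ t k]
  rw [heq] at comb
  convert comb using 1
  · rfl
  -- value computation
  have hs1 : 1 + x ≠ 0 := by positivity
  have hc1 : 0 < 1 + x*Real.cos φ := by nlinarith [Real.neg_one_le_cos φ]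
  have hden2 : (0:ℝ) < 1+2*x*Real.cos φ+x^2 := by
    nlinarith [Real.sin_sq_add_cos_sq φ, sq_nonneg (x*Real.sin φ), mul_pos hc1 hc1]
  have hwre : w.re = y * Real.cos φ := by
    rw [hwdef, Complex.re_ofReal_mul, Complex.exp_ofReal_mul_I_re]
  have hwim : w.im = y * Real.sin φ := by
    rw [hwdef, Complex.im_ofReal_mul, Complex.exp_ofReal_mul_I_im]
  have hnormSq : Complex.normSq (1 - w) = 1+2*x*Real.cos φ+x^2 := by
    rw [Complex.normSq_apply, Complex.sub_re, Complex.sub_im, Complex.one_re, Complex.one_im,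
      hwre, hwim, hydef]
    nlinarith [Real.sin_sq_add_cos_sq φ]
  have hrecalc : (w * (1-w)⁻¹).re = -((x*Real.cos φ + x^2)/(1+2*x*Real.cos φ+x^2)) := by
    rw [← div_eq_mul_inv, Complex.div_re, hnormSq, Complex.sub_re, Complex.sub_im,
      Complex.one_re, Complex.one_im, hwre, hwim, hydef]
    have := Real.sin_sq_add_cos_sq φ
    field_simp
    rw [← neg_div]; congr 1; linear_combination (-x) * this
  rw [hrecalc]
  unfold gfun
  rw [← hxdef, hydef]
  have : -x * (1 - -x)⁻¹ = -(x/(1+x)) := by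
    rw [sub_neg_eq_add, neg_mul, div_eq_mul_inv]
  rw [this]
  ring

lemma aux_bound (r φ t : ℝ) (hs : 0 < Real.sin φ) (hx0 : 0 < r*t) (hx1 : r*t ≤ 1)
    (ht0 : 0 < t) (ht1 : t ≤ 1) (n : ℕ) :
    |∑ k ∈ Finset.range n, (-1:ℝ)^k * r^(k+1) * (1 - Real.cos ((k+1)*φ)) * t^(k+2)|
      ≤ 2 + 2/Real.sin φ := by
  set x := r*t with hxdef
  set y : ℝ := -x with hydef
  set w : ℂ := ((y:ℝ) : ℂ) * Complex.exp (↑φ * Complex.I) with hwdef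
  have hwnorm : ‖w‖ ≤ 1 := by
    rw [hwdef, norm_mul, Complex.norm_exp_ofReal_mul_I]
    simp [hydef, abs_of_pos hx0]
    exact hx1
  have hwnorm' : ‖w‖ = x := by
    rw [hwdef, norm_mul, Complex.norm_exp_ofReal_mul_I]
    simp [hydef, abs_of_pos hx0]
  -- rewrite the sum
  have hsum : ∑ k ∈ Finset.range n, (-1:ℝ)^k * r^(k+1) * (1 - Real.cos ((k+1)*φ)) * t^(k+2)
      = t * (-(∑ k ∈ Finset.range n, y^(k+1)) + (∑ k ∈ Finset.range n, w^(k+1)).re) := by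
    simp_rw [term_eq r φ t, ← hxdef, ← hydef, ← hwdef]
    rw [Complex.re_sum, ← Finset.sum_neg_distrib, ← Finset.sum_add_distrib, ← Finset.mul_sum]
  rw [hsum]
  -- bound the real geometric sum
  have hyne : y ≠ 1 := by rw [hydef]; nlinarith
  have hG1 : |∑ k ∈ Finset.range n, y^(k+1)| ≤ 2 := by
    have : ∑ k ∈ Finset.range n, y^(k+1) = y * ((y^n - 1)/(y-1)) := by
      rw [← geom_sum_eq hyne, Finset.mul_sum]
      exact Finset.sum_congr rfl fun k _ => pow_succ' y k
    rw [this, abs_mul, abs_div]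
    have hy1 : |y| ≤ 1 := by rw [hydef, abs_neg, abs_of_pos hx0]; exact hx1
    have hyn : |y^n - 1| ≤ 2 := by
      have := abs_pow y n
      calc |y^n - 1| ≤ |y^n| + 1 := by
            calc |y^n - 1| ≤ |y^n| + |(1:ℝ)| := abs_sub _ _
            _ = |y^n| + 1 := by norm_num
        _ ≤ 2 := by rw [abs_pow]; have h := pow_le_one₀ (abs_nonneg y) hy1 (n := n); linarith
    have hyd : (1:ℝ) ≤ |y - 1| := by
      rw [hydef, abs_of_nonpos (by nlinarith)]; nlinarith
    calc |y| * (|y^n - 1|/|y-1|) ≤ 1 * (2/1) := by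
          apply mul_le_mul hy1 _ (by positivity) zero_le_one
          exact div_le_div₀ (by norm_num) hyn one_pos hyd
      _ = 2 := by norm_num
  -- bound the complex geometric sum
  have hwden : Real.sin φ ≤ ‖1 - w‖ := by
    have hnsq : Real.sin φ^2 ≤ Complex.normSq (1-w) := by
      rw [Complex.normSq_apply, Complex.sub_re, Complex.sub_im, Complex.one_re, Complex.one_im,
        hwdef, Complex.re_ofReal_mul, Complex.im_ofReal_mul, Complex.exp_ofReal_mul_I_re,
        Complex.exp_ofReal_mul_I_im, hydef]
      nlinarith [Real.sin_sq_add_cos_sq φ, sq_nonneg (x + Real.cos φ), sq_nonneg (x*Real.sin φ)]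
    have h2 := Real.sqrt_le_sqrt hnsq
    rw [Real.sqrt_sq hs.le, ← Complex.norm_def] at h2
    exact h2
  have hwne : w ≠ 1 := by
    intro h
    rw [h] at hwden
    simp at hwden
    linarith
  have hG2 : |(∑ k ∈ Finset.range n, w^(k+1)).re| ≤ 2/Real.sin φ := by
    have hge : ∑ k ∈ Finset.range n, w^(k+1) = w * ((w^n - 1)/(w-1)) := by
      rw [← geom_sum_eq hwne, Finset.mul_sum]
      exact Finset.sum_congr rfl fun k _ => pow_succ' w k
    calc |(∑ k ∈ Finset.range n, w^(k+1)).re| ≤ ‖∑ k ∈ Finset.range n, w^(k+1)‖ :=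
          Complex.abs_re_le_norm _
      _ = ‖w‖ * (‖w^n - 1‖/‖w-1‖) := by rw [hge, norm_mul, norm_div]
      _ ≤ 1 * (2/Real.sin φ) := by
          apply mul_le_mul hwnorm _ (by positivity) zero_le_one
          apply div_le_div₀ (by norm_num) _ hs _
          · calc ‖w^n - 1‖ ≤ ‖w^n‖ + ‖(1:ℂ)‖ := norm_sub_le _ _
              _ ≤ 2 := by
                  rw [norm_pow, norm_one]
                  have h := pow_le_one₀ (norm_nonneg w) hwnorm (n := n); linarith
          · rwa [← norm_neg, neg_sub] at hwden
      _ = 2/Real.sin φ := by norm_num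
  calc |t * (-(∑ k ∈ Finset.range n, y^(k+1)) + (∑ k ∈ Finset.range n, w^(k+1)).re)|
      ≤ |t| * (|∑ k ∈ Finset.range n, y^(k+1)| + |(∑ k ∈ Finset.range n, w^(k+1)).re|) := by
        rw [abs_mul]
        apply mul_le_mul_of_nonneg_left _ (abs_nonneg t)
        calc |(-(∑ k ∈ Finset.range n, y^(k+1)) + (∑ k ∈ Finset.range n, w^(k+1)).re)|
            ≤ |(-(∑ k ∈ Finset.range n, y^(k+1)))| + |(∑ k ∈ Finset.range n, w^(k+1)).re| :=
              abs_add_le _ _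
          _ = _ := by rw [abs_neg]
    _ ≤ 1 * (2 + 2/Real.sin φ) := by
        apply mul_le_mul _ (add_le_add hG1 hG2) (by positivity) zero_le_one
        rw [abs_of_pos ht0]; exact ht1
    _ = 2 + 2/Real.sin φ := by norm_num

theorem stmt_0 (r φ : ℝ) (hr : r ∈ Set.Ioc (0:ℝ) 1) (hφ : φ ∈ Set.Ioo 0 π)
    (A B : ℝ)
    (hA : Tendsto (fun n => ∑ k ∈ Finset.range n,
        (-1)^((k+1)+1) * r^(k+1) * Real.cos ((k+1) * φ) / ((k+1) + 2)) atTop (𝓝 A))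
    (hB : Tendsto (fun n => ∑ k ∈ Finset.range n,
        (-1)^((k+1)+1) * r^(k+1) / ((k+1) + 2)) atTop (𝓝 B)) :
    A < B := by
  obtain ⟨hr0, hr1⟩ := hr
  obtain ⟨hφ0, hφπ⟩ := hφ
  have hs : 0 < Real.sin φ := Real.sin_pos_of_pos_of_lt_pi hφ0 hφπ
  have hc1 : Real.cos φ < 1 := by
    nlinarith [Real.sin_sq_add_cos_sq φ, hs, mul_pos hs hs]
  -- the partial sums of the difference series
  set D : ℕ → ℝ := fun n => ∑ k ∈ Finset.range n,
      (-1)^k * r^(k+1) * (1 - Real.cos ((k+1)*φ)) / ((k:ℝ)+3) with hD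
  -- step 1 : B - A is the limit of D
  have hlim1 : Tendsto D atTop (𝓝 (B - A)) := by
    have := hB.sub hA
    convert this using 2 with n
    rw [← Finset.sum_sub_distrib]
    apply Finset.sum_congr rfl
    intro k _
    push_cast
    ring
  -- step 2 : D n equals an interval integral of partial sums S n
  have hDint : ∀ n, D n = ∫ t in (0:ℝ)..1,
      ∑ k ∈ Finset.range n, (-1)^k * r^(k+1) * (1 - Real.cos ((k+1)*φ)) * t^(k+2) := by
    intro n
    rw [intervalIntegral.integral_finset_sum]
    · apply Finset.sum_congr rfl
      intro k _
      rw [intervalIntegral.integral_const_mul, integral_pow]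
      push_cast
      ring
    · intro k _
      apply Continuous.intervalIntegrable
      continuity
  -- step 3 : the partial sums tend to ∫ g by dominated convergence
  have hlim2 : Tendsto (fun n => ∫ t in (0:ℝ)..1,
      ∑ k ∈ Finset.range n, (-1)^k * r^(k+1) * (1 - Real.cos ((k+1)*φ)) * t^(k+2))
      atTop (𝓝 (∫ t in (0:ℝ)..1, gfun r φ t)) := by
    have hconv : ∀ f : ℝ → ℝ, ∫ t in (0:ℝ)..1, f t = ∫ t in Set.Ioo (0:ℝ) 1, f t := by
      intro f
      rw [intervalIntegral.integral_of_le zero_le_one, MeasureTheory.integral_Ioc_eq_integral_Ioo]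
    simp_rw [hconv]
    apply MeasureTheory.tendsto_integral_of_dominated_convergence
      (fun _ => 2 + 2/Real.sin φ)
    · intro n
      apply Continuous.aestronglyMeasurable
      apply continuous_finset_sum
      intro k _
      fun_prop
    · exact MeasureTheory.integrableOn_const measure_Ioo_lt_top.ne
    · intro n
      rw [MeasureTheory.ae_restrict_iff' measurableSet_Ioo]
      filter_upwards with t ht
      have h1 : 0 < r*t := mul_pos hr0 ht.1
      have h2 : r*t ≤ 1 := by nlinarith [ht.1, ht.2]
      rw [Real.norm_eq_abs]
      exact aux_bound r φ t hs h1 h2 ht.1 ht.2.le n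
    · rw [MeasureTheory.ae_restrict_iff' measurableSet_Ioo]
      filter_upwards with t ht
      have h1 : 0 < r*t := mul_pos hr0 ht.1
      have h2 : r*t < 1 := by nlinarith [ht.1, ht.2]
      exact (aux_hasSum r φ t h1 h2).tendsto_sum_nat
  -- step 4 : the integral of g is positive
  have hpos : 0 < ∫ t in (0:ℝ)..1, gfun r φ t := by
    have hden2 : ∀ t : ℝ, 0 < 1+2*(r*t)*Real.cos φ+(r*t)^2 := by
      intro t
      nlinarith [sq_nonneg (r*t + Real.cos φ), Real.sin_sq_add_cos_sq φ, mul_pos hs hs]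
    apply intervalIntegral.intervalIntegral_pos_of_pos_on
    · apply ContinuousOn.intervalIntegrable
      apply ContinuousOn.mul continuousOn_id
      apply ContinuousOn.sub
      · apply ContinuousOn.div (by fun_prop) (by fun_prop)
        intro t ht
        rw [Set.uIcc_of_le (by norm_num : (0:ℝ) ≤ 1)] at ht
        nlinarith [ht.1, mul_nonneg hr0.le ht.1]
      · exact ContinuousOn.div (by fun_prop) (by fun_prop) (fun t _ => (hden2 t).ne')
    · intro t ht
      obtain ⟨ht0, ht1⟩ := ht
      have hx0 : 0 < r*t := mul_pos hr0 ht0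
      have hx1 : r*t < 1 := lt_of_le_of_lt (by nlinarith) ht1
      unfold gfun
      apply mul_pos ht0
      rw [sub_pos, div_lt_div_iff₀ (hden2 t) (by nlinarith)]
      nlinarith [mul_pos hx0 (mul_pos (sub_pos.mpr hx1) (sub_pos.mpr hc1))]
    · norm_num
  -- combine
  have h5 : Tendsto D atTop (𝓝 (∫ t in (0:ℝ)..1, gfun r φ t)) := by
    simpa only [← hDint] using hlim2
  have := tendsto_nhds_unique hlim1 h5
  linarith [this ▸ hpos]
end

section
/- For r ∈ (0, 1] and x ∈ (-1, 1], ∑_{k=1}^∞ (-1)^{k+1} r^k T_k(x)/(k+2) = (1/r²) ∫_0^r t² (t+x)/(t²+2xt+1) dt, where T_k is the k-th Chebyshev polynomial of the first kind. -/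
open Real Filter Topology Polynomial.Chebyshev intervalIntegral

lemma abs_T_le (x : ℝ) (h1 : -1 ≤ x) (h2 : x ≤ 1) (n : ℤ) : |(T ℝ n).eval x| ≤ 1 := by
  have hx : x = Real.cos (Real.arccos x) := (Real.cos_arccos h1 h2).symm
  rw [hx, T_real_cos]
  exact abs_cos_le_one _

lemma denom_lb (x t : ℝ) (hx1 : -1 < x) (hx2 : x ≤ 1) (ht0 : 0 ≤ t) (ht1 : t ≤ 1) :
    (1+x)^2/4 ≤ t^2 + 2*x*t + 1 := by
  rcases le_or_gt 0 x with h | h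
  · nlinarith
  · nlinarith [sq_nonneg (t+x)]

lemma cheb_key (x t : ℝ) (hd : t^2+2*x*t+1 ≠ 0) (n : ℕ) :
    t^2*(t+x)/(t^2+2*x*t+1) =
      (∑ k ∈ Finset.range n, (-1:ℝ)^k * (T ℝ (k+1)).eval x * t^(k+2))
      + (-1)^n * t^(n+2) * ((T ℝ (n+1)).eval x + t * (T ℝ (n:ℤ)).eval x) / (t^2+2*x*t+1) := by
  induction n with
  | zero =>
    simp only [Finset.range_zero, Finset.sum_empty, zero_add, pow_zero, Nat.cast_zero,
      zero_add, T_one, T_zero, Polynomial.eval_X, Polynomial.eval_one, one_mul]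
    rw [div_eq_div_iff hd hd]
    ring
  | succ n ih =>
    rw [Finset.sum_range_succ, ih]
    have hrec : Polynomial.eval x (T ℝ ((n:ℤ)+2)) =
        2*x*Polynomial.eval x (T ℝ ((n:ℤ)+1)) - Polynomial.eval x (T ℝ (n:ℤ)) := by
      rw [T_add_two]; simp
    push_cast
    rw [show ((n:ℤ)+1+1) = (n:ℤ)+2 from by ring, hrec]
    linear_combination (-1:ℝ)^n * t^(n+2) * Polynomial.eval x (T ℝ ((n:ℤ)+1)) * (mul_inv_cancel₀ hd)

theorem stmt_1 (r x : ℝ) (hr : r ∈ Set.Ioc (0:ℝ) 1) (hx : x ∈ Set.Ioc (-1:ℝ) 1) :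
    Tendsto (fun n => ∑ k ∈ Finset.range n,
        (-1)^((k+1)+1) * r^(k+1) * (Polynomial.Chebyshev.T ℝ (k+1)).eval x / ((k+1) + 2))
      atTop
      (𝓝 ((1 / r^2) * ∫ t in (0:ℝ)..r, t^2 * (t + x) / (t^2 + 2*x*t + 1))) := by
  obtain ⟨hr0, hr1⟩ := hr
  obtain ⟨hx1, hx2⟩ := hx
  set c : ℝ := (1+x)^2/4 with hc
  have hcpos : 0 < c := by
    have : (0:ℝ) < 1 + x := by linarith
    positivity
  have huIcc : Set.uIcc (0:ℝ) r = Set.Icc 0 r := Set.uIcc_of_le hr0.le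
  have hdpos : ∀ t ∈ Set.Icc (0:ℝ) r, 0 < t^2+2*x*t+1 := fun t ht =>
    lt_of_lt_of_le hcpos (denom_lb x t hx1 hx2 ht.1 (ht.2.trans hr1))
  -- integrability facts
  have hfint : IntervalIntegrable (fun t => t^2*(t+x)/(t^2+2*x*t+1)) MeasureTheory.volume 0 r := by
    apply ContinuousOn.intervalIntegrable
    rw [huIcc]
    exact ContinuousOn.div (by fun_prop) (by fun_prop) (fun t ht => (hdpos t ht).ne')
  have hRint : ∀ n : ℕ, IntervalIntegrable
      (fun t => (-1:ℝ)^n * t^(n+2) * ((T ℝ (n+1)).eval x + t * (T ℝ (n:ℤ)).eval x) / (t^2+2*x*t+1))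
      MeasureTheory.volume 0 r := by
    intro n
    apply ContinuousOn.intervalIntegrable
    rw [huIcc]
    exact ContinuousOn.div (by fun_prop) (by fun_prop) (fun t ht => (hdpos t ht).ne')
  have hSint : ∀ n : ℕ, IntervalIntegrable
      (fun t => ∑ k ∈ Finset.range n, (-1:ℝ)^k * (T ℝ (k+1)).eval x * t^(k+2))
      MeasureTheory.volume 0 r := by
    intro n
    apply Continuous.intervalIntegrable
    fun_prop
  -- value of partial sums as integrals
  have hterm : ∀ k : ℕ, (∫ t in (0:ℝ)..r, (-1:ℝ)^k * (T ℝ (k+1)).eval x * t^(k+2))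
      = (-1:ℝ)^k * (T ℝ (k+1)).eval x * (r^(k+3)/((k:ℝ)+3)) := by
    intro k
    rw [intervalIntegral.integral_const_mul, integral_pow]
    have : (0:ℝ)^(k+2+1) = 0 := by norm_num
    rw [this]
    push_cast
    ring
  have hFn : ∀ n : ℕ, (∑ k ∈ Finset.range n,
        (-1:ℝ)^((k+1)+1) * r^(k+1) * (T ℝ (k+1)).eval x / ((k+1:ℝ) + 2))
      = (1/r^2) * ∫ t in (0:ℝ)..r, ∑ k ∈ Finset.range n, (-1:ℝ)^k * (T ℝ (k+1)).eval x * t^(k+2) := by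
    intro n
    rw [intervalIntegral.integral_finset_sum (fun k _ => by
      apply Continuous.intervalIntegrable; fun_prop)]
    rw [Finset.mul_sum]
    refine Finset.sum_congr rfl fun k _ => ?_
    rw [hterm k]
    have hk3 : ((k:ℝ)+3) ≠ 0 := by positivity
    have hrne : r ≠ 0 := hr0.ne'
    rw [show k+1+1 = k+2 from rfl, show k+3 = (k+1)+2 from rfl, pow_add, pow_add]
    field_simp
    ring
  -- remainder formula
  have hrem : ∀ n : ℕ,
      ((1 / r^2) * ∫ t in (0:ℝ)..r, t^2 * (t + x) / (t^2 + 2*x*t + 1))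
      - (∑ k ∈ Finset.range n, (-1:ℝ)^((k+1)+1) * r^(k+1) * (T ℝ (k+1)).eval x / ((k+1:ℝ) + 2))
      = (1/r^2) * ∫ t in (0:ℝ)..r,
          (-1:ℝ)^n * t^(n+2) * ((T ℝ (n+1)).eval x + t * (T ℝ (n:ℤ)).eval x) / (t^2+2*x*t+1) := by
    intro n
    rw [hFn n, ← mul_sub, ← intervalIntegral.integral_sub hfint (hSint n)]
    congr 1
    apply intervalIntegral.integral_congr
    intro t ht
    rw [huIcc] at ht
    have hd := (hdpos t ht).ne'
    have := cheb_key x t hd n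
    simp only []
    linarith [this]
  -- bound on remainder integrand
  have hbound : ∀ n : ℕ, ∀ t ∈ Set.Icc (0:ℝ) r,
      ‖(-1:ℝ)^n * t^(n+2) * ((T ℝ (n+1)).eval x + t * (T ℝ (n:ℤ)).eval x) / (t^2+2*x*t+1)‖
      ≤ (2/c) * t^(n+2) := by
    intro n t ht
    have ht0 := ht.1
    have ht1 : t ≤ 1 := ht.2.trans hr1
    have hdc : c ≤ t^2+2*x*t+1 := denom_lb x t hx1 hx2 ht0 ht1
    have hdp : 0 < t^2+2*x*t+1 := lt_of_lt_of_le hcpos hdc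
    have hT1 := abs_T_le x hx1.le hx2 ((n:ℤ)+1)
    have hT0 := abs_T_le x hx1.le hx2 (n:ℤ)
    rw [Real.norm_eq_abs, abs_div, abs_of_pos hdp, abs_mul, abs_mul, abs_pow, abs_neg, abs_one,
      one_pow, one_mul, abs_pow, abs_of_nonneg ht0]
    rw [div_le_iff₀ hdp]
    have habs : |(T ℝ ((n:ℤ)+1)).eval x + t * (T ℝ (n:ℤ)).eval x| ≤ 2 := by
      calc |(T ℝ ((n:ℤ)+1)).eval x + t * (T ℝ (n:ℤ)).eval x|
          ≤ |(T ℝ ((n:ℤ)+1)).eval x| + |t * (T ℝ (n:ℤ)).eval x| := abs_add_le _ _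
        _ ≤ 1 + 1 := by
            have : |t * (T ℝ (n:ℤ)).eval x| = t * |(T ℝ (n:ℤ)).eval x| := by
              rw [abs_mul, abs_of_nonneg ht0]
            nlinarith [abs_nonneg ((T ℝ (n:ℤ)).eval x)]
        _ = 2 := by norm_num
    have htp : (0:ℝ) ≤ t^(n+2) := by positivity
    calc t^(n+2) * |(T ℝ ((n:ℤ)+1)).eval x + t * (T ℝ (n:ℤ)).eval x|
        ≤ t^(n+2) * 2 := by nlinarith
      _ ≤ (2/c) * t^(n+2) * (t^2+2*x*t+1) := by
          rw [div_mul_eq_mul_div, div_mul_eq_mul_div, le_div_iff₀ hcpos]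
          nlinarith
  -- integral bound
  have hintbound : ∀ n : ℕ,
      ‖∫ t in (0:ℝ)..r,
          (-1:ℝ)^n * t^(n+2) * ((T ℝ (n+1)).eval x + t * (T ℝ (n:ℤ)).eval x) / (t^2+2*x*t+1)‖
      ≤ (2/c) * (r^(n+3)/((n:ℝ)+3)) := by
    intro n
    have h1 : ‖∫ t in (0:ℝ)..r, (-1:ℝ)^n * t^(n+2) * ((T ℝ (n+1)).eval x + t * (T ℝ (n:ℤ)).eval x) / (t^2+2*x*t+1)‖
        ≤ |∫ t in (0:ℝ)..r, (2/c) * t^(n+2)| := by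
      refine (intervalIntegral.norm_integral_le_of_norm_le hr0.le ?_ ?_).trans (le_abs_self _)
      · refine MeasureTheory.ae_of_all _ (fun t ht => ?_)
        have ht' : t ∈ Set.Icc (0:ℝ) r := by
          exact ⟨ht.1.le, ht.2⟩
        exact hbound n t ht'
      · apply Continuous.intervalIntegrable; fun_prop
    have h2 : (∫ t in (0:ℝ)..r, (2/c) * t^(n+2)) = (2/c) * (r^(n+3)/((n:ℝ)+3)) := by
      rw [intervalIntegral.integral_const_mul, integral_pow]
      have : (0:ℝ)^(n+2+1) = 0 := by norm_num
      rw [this]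
      push_cast
      ring
    rw [h2] at h1
    refine h1.trans (le_of_eq (abs_of_nonneg ?_))
    positivity
  -- conclude
  rw [← tendsto_sub_nhds_zero_iff]
  apply squeeze_zero_norm (a := fun n : ℕ => (1/r^2) * ((2/c) * (1/((n:ℝ)+3))))
  · intro n
    have := hrem n
    have hkey : ‖(∑ k ∈ Finset.range n,
        (-1:ℝ)^((k+1)+1) * r^(k+1) * (T ℝ (k+1)).eval x / ((k+1:ℝ) + 2))
        - ((1 / r^2) * ∫ t in (0:ℝ)..r, t^2 * (t + x) / (t^2 + 2*x*t + 1))‖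
        = ‖(1/r^2) * ∫ t in (0:ℝ)..r,
          (-1:ℝ)^n * t^(n+2) * ((T ℝ (n+1)).eval x + t * (T ℝ (n:ℤ)).eval x) / (t^2+2*x*t+1)‖ := by
      rw [← this, norm_sub_rev]
    rw [hkey, norm_mul]
    have hr2 : (0:ℝ) < 1/r^2 := by positivity
    rw [Real.norm_eq_abs, abs_of_pos hr2]
    apply mul_le_mul_of_nonneg_left _ hr2.le
    calc ‖∫ t in (0:ℝ)..r,
          (-1:ℝ)^n * t^(n+2) * ((T ℝ (n+1)).eval x + t * (T ℝ (n:ℤ)).eval x) / (t^2+2*x*t+1)‖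
        ≤ (2/c) * (r^(n+3)/((n:ℝ)+3)) := hintbound n
      _ ≤ (2/c) * (1/((n:ℝ)+3)) := by
          apply mul_le_mul_of_nonneg_left _ (by positivity)
          apply div_le_div_of_nonneg_right ?_ (by positivity) |>.trans_eq rfl
          · exact pow_le_one₀ hr0.le hr1
  · have h3 : Tendsto (fun n : ℕ => 1/((n:ℝ)+3)) atTop (𝓝 0) := by
      apply Filter.Tendsto.div_atTop tendsto_const_nhds
      exact tendsto_atTop_add_const_right _ _ tendsto_natCast_atTop_atTop
    have := (h3.const_mul (2/c)).const_mul (1/r^2)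
    simpa using this
end

section
/- For r ∈ (0,1] and x ∈ (-1,1), (1/r²) ∫_0^r t²(t+x)/(t²+2xt+1) dt < (log(1+r) - r + r²/2)/r². -/
open Real

theorem stmt_7 (r x : ℝ) (hr : r ∈ Set.Ioc (0:ℝ) 1) (hx : x ∈ Set.Ioo (-1:ℝ) 1) :
    (1 / r^2) * ∫ t in (0:ℝ)..r, t^2 * (t + x) / (t^2 + 2*x*t + 1)
      < (Real.log (1 + r) - r + r^2 / 2) / r^2 := by
  obtain ⟨hr0, hr1⟩ := hr
  obtain ⟨hx1, hx2⟩ := hx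
  have hden : ∀ t : ℝ, 0 < t^2 + 2*x*t + 1 := by
    intro t
    have h1 : t^2 + 2*x*t + 1 = (t+x)^2 + (1-x^2) := by ring
    have h2 : 0 < 1 - x^2 := by nlinarith
    nlinarith [sq_nonneg (t+x)]
  -- compute the RHS integral
  have hint : ∫ t in (0:ℝ)..r, t^2 / (t + 1) = Real.log (1 + r) - r + r^2 / 2 := by
    have : ∀ t ∈ Set.uIcc (0:ℝ) r, HasDerivAt (fun t => Real.log (1 + t) - t + t^2 / 2)
        (t^2 / (t + 1)) t := by
      intro t ht
      rw [Set.uIcc_of_le hr0.le] at ht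
      have ht0 : 0 ≤ t := ht.1
      have h1t : (1 : ℝ) + t ≠ 0 := by linarith
      have h := ((hasDerivAt_id t).const_add 1).log h1t
      have h2 : HasDerivAt (fun t : ℝ => Real.log (1 + t) - t + t^2 / 2)
          (1 / (1 + t) - 1 + t) t := by
        refine HasDerivAt.congr_deriv ((h.sub (hasDerivAt_id t)).add
          ((hasDerivAt_pow 2 t).div_const 2)) ?_
        norm_num
      convert h2 using 1
      field_simp
      ring
    rw [intervalIntegral.integral_eq_sub_of_hasDerivAt this]
    · simp
    · apply ContinuousOn.intervalIntegrable
      apply ContinuousOn.div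
      · fun_prop
      · fun_prop
      · intro t ht
        rw [Set.uIcc_of_le hr0.le] at ht
        intro h; linarith [ht.1]
  have key : (∫ t in (0:ℝ)..r, t^2 * (t + x) / (t^2 + 2*x*t + 1))
      < ∫ t in (0:ℝ)..r, t^2 / (t + 1) := by
    apply intervalIntegral.integral_lt_integral_of_continuousOn_of_le_of_exists_lt hr0
    · apply ContinuousOn.div
      · fun_prop
      · fun_prop
      · intro t _; exact (hden t).ne'
    · apply ContinuousOn.div
      · fun_prop
      · fun_prop
      · intro t ht; intro h; linarith [ht.1]
    · intro t ht
      have h1 : 0 < t + 1 := by linarith [ht.1]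
      rw [div_le_div_iff₀ (hden t) h1]
      nlinarith [mul_nonneg (sq_nonneg t) (mul_nonneg (by linarith [ht.2] : (0:ℝ) ≤ 1 - t) (by linarith : (0:ℝ) ≤ 1 - x))]
    · refine ⟨r/2, ⟨by linarith, by linarith⟩, ?_⟩
      have h0 : 0 < r/2 := by linarith
      have h1 : r/2 < 1 := by linarith
      have hp : 0 < r/2 + 1 := by linarith
      rw [div_lt_div_iff₀ (hden (r/2)) hp]
      nlinarith [mul_pos (mul_pos h0 h0) (mul_pos (by linarith : (0:ℝ) < 1 - r/2) (by linarith : (0:ℝ) < 1 - x))]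
    all_goals skip
  have h2 : (0:ℝ) < 1 / r^2 := by positivity
  calc 1 / r^2 * ∫ t in (0:ℝ)..r, t^2 * (t + x) / (t^2 + 2*x*t + 1)
      < 1 / r^2 * ∫ t in (0:ℝ)..r, t^2 / (t + 1) := (mul_lt_mul_iff_right₀ h2).mpr key
    _ = (Real.log (1 + r) - r + r^2 / 2) / r^2 := by rw [hint]; ring
end

section
/- For φ ∈ (0, π), ∑_{k=1}^∞ (-1)^{k+1} cos(kφ)/(k+2) < log 2 - 1/2. -/
open Real Filter Topology MeasureTheory intervalIntegral

lemma integral_G : ∫ t in (0:ℝ)..1, t^2/(1+t) = Real.log 2 - 1/2 := by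
  have h : ∀ t ∈ Set.uIcc (0:ℝ) 1, HasDerivAt (fun t : ℝ => t^2/2 - t + Real.log (1+t))
      (t^2/(1+t)) t := by
    intro t ht
    simp only [Set.uIcc_of_le (by norm_num : (0:ℝ) ≤ 1), Set.mem_Icc] at ht
    have h1 : (0:ℝ) < 1 + t := by linarith [ht.1]
    have := (((hasDerivAt_pow 2 t).div_const 2).sub (hasDerivAt_id t)).add
      (((hasDerivAt_id t).const_add 1).log h1.ne')
    refine this.congr_deriv ?_
    simp only [id]
    field_simp
    ring
  rw [intervalIntegral.integral_eq_sub_of_hasDerivAt h]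
  · norm_num
    ring
  · apply ContinuousOn.intervalIntegrable
    apply ContinuousOn.div (by fun_prop) (by fun_prop)
    intro t ht
    simp only [Set.uIcc_of_le (by norm_num : (0:ℝ) ≤ 1), Set.mem_Icc] at ht
    intro h0; linarith [ht.1]

theorem stmt_9 (φ : ℝ) (hφ : φ ∈ Set.Ioo 0 π) (S : ℝ)
    (hS : Tendsto (fun n => ∑ k ∈ Finset.range n,
        (-1)^((k+1)+1) * Real.cos ((k+1) * φ) / ((k+1) + 2)) atTop (𝓝 S)) :
    S < Real.log 2 - 1/2 := by
  obtain ⟨hφ0, hφπ⟩ := hφ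
  set c := Real.cos φ with hc
  set s := Real.sin φ with hs
  have hs0 : 0 < s := Real.sin_pos_of_pos_of_lt_pi hφ0 hφπ
  have hsc : s^2 + c^2 = 1 := Real.sin_sq_add_cos_sq φ
  have hc1 : c < 1 := by
    have := Real.cos_lt_cos_of_nonneg_of_le_pi (le_refl 0) hφπ.le hφ0
    simpa using this
  have hcm1 : -1 < c := by nlinarith
  -- denominator positivity
  have hden : ∀ t : ℝ, 0 < 1 + 2*t*c + t^2 := by
    intro t; nlinarith [sq_nonneg (t + c)]
  set F : ℝ → ℝ := fun t => (t^2*c + t^3) / (1 + 2*t*c + t^2) with hF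
  set G : ℝ → ℝ := fun t => t^2 / (1+t) with hG
  -- the complex number z t
  set z : ℝ → ℂ := fun t => (-(t:ℂ)) * Complex.exp (φ * Complex.I) with hz
  have hznorm : ∀ t : ℝ, 0 ≤ t → ‖z t‖ = t := by
    intro t ht
    simp [hz, norm_mul, Complex.norm_exp, abs_of_nonneg ht]
  have hzre : ∀ t : ℝ, (z t).re = -t * c ∧ (z t).im = -t * s := by
    intro t
    constructor <;>
      simp [hz, Complex.exp_mul_I, Complex.cos_ofReal_re, Complex.sin_ofReal_re,
        Complex.mul_re, Complex.mul_im, hc, hs]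
  have hnormSq : ∀ t : ℝ, Complex.normSq (1 - z t) = 1 + 2*t*c + t^2 := by
    intro t
    rw [Complex.normSq_apply]
    have h1 := (hzre t).1
    have h2 := (hzre t).2
    simp only [Complex.sub_re, Complex.sub_im, Complex.one_re, Complex.one_im, h1, h2]
    nlinarith
  have hz1 : ∀ t : ℝ, 1 - z t ≠ 0 := by
    intro t h
    have := hnormSq t
    rw [h, map_zero] at this
    nlinarith [hden t]
  -- powers of z
  have hzpow : ∀ t : ℝ, ∀ m : ℕ, ((z t)^m).re = (-t)^m * Real.cos (m * φ) := by
    intro t m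
    have : (z t)^m = ((-t : ℝ)^m : ℝ) * Complex.exp ((m*φ : ℝ) * Complex.I) := by
      rw [hz, mul_pow, ← Complex.exp_nat_mul]
      push_cast
      ring_nf
    rw [this, Complex.re_ofReal_mul, Complex.exp_ofReal_mul_I_re]
  -- partial sums fn
  set f : ℕ → ℝ → ℝ := fun n t => ∑ k ∈ Finset.range n,
      (-1)^k * Real.cos ((k+1) * φ) * t^(k+2) with hf
  have hfz : ∀ n t, f n t = (-t) * (∑ j ∈ Finset.range n, (z t)^(j+1)).re := by
    intro n t
    rw [hf]
    simp only [Complex.re_sum, Finset.mul_sum]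
    apply Finset.sum_congr rfl
    intro j _
    rw [hzpow t (j+1)]
    push_cast
    ring
  -- partial sum of the series equals integral of f n
  have hSn : ∀ n : ℕ, (∑ k ∈ Finset.range n,
      (-1:ℝ)^((k+1)+1) * Real.cos ((k+1) * φ) / ((k+1) + 2)) = ∫ t in (0:ℝ)..1, f n t := by
    intro n
    rw [hf, intervalIntegral.integral_finset_sum]
    · apply Finset.sum_congr rfl
      intro k _
      rw [intervalIntegral.integral_const_mul, integral_pow]
      push_cast
      ring_nf
    · intro k _
      apply ContinuousOn.intervalIntegrable
      fun_prop
  -- pointwise limit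
  have hlim : ∀ t ∈ Set.Ioo (0:ℝ) 1, Tendsto (fun n => f n t) atTop (𝓝 (F t)) := by
    intro t ht
    have hzt : ‖z t‖ < 1 := by rw [hznorm t ht.1.le]; exact ht.2
    have hgeom : HasSum (fun j => (z t)^(j+1)) (z t * (1 - z t)⁻¹) := by
      have := (hasSum_geometric_of_norm_lt_one hzt).mul_left (z t)
      simpa [← pow_succ'] using this
    have htend := hgeom.tendsto_sum_nat
    have h2 : Tendsto (fun n => (-t) * (∑ j ∈ Finset.range n, (z t)^(j+1)).re) atTop
        (𝓝 ((-t) * (z t * (1 - z t)⁻¹).re)) :=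
      (tendsto_const_nhds.mul ((Complex.continuous_re.tendsto _).comp htend))
    have heq : (-t) * (z t * (1 - z t)⁻¹).re = F t := by
      rw [Complex.mul_re, Complex.inv_re, Complex.inv_im, hnormSq]
      have h1 := (hzre t).1
      have h2 := (hzre t).2
      simp only [Complex.sub_re, Complex.sub_im, Complex.one_re, Complex.one_im, h1, h2, hF]
      have hD := (hden t).ne'
      field_simp
      linear_combination (t^3/(1+t*c*2+t^2)) * hsc
    rw [← heq]
    simpa [hfz] using h2
  -- the bound
  have hbound : ∀ n, ∀ t ∈ Set.uIoc (0:ℝ) 1, ‖f n t‖ ≤ 2 / s := by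
    intro n t ht
    rw [Set.uIoc_of_le (by norm_num : (0:ℝ) ≤ 1)] at ht
    have ht0 : 0 < t := ht.1
    have ht1 : t ≤ 1 := ht.2
    have hnz : ‖1 - z t‖ ≥ s := by
      have h1 : ‖1 - z t‖^2 = 1 + 2*t*c + t^2 := by
        rw [← hnormSq t, Complex.sq_norm]
      nlinarith [norm_nonneg (1 - z t), sq_nonneg (t + c), hs0]
    have hsumz : ‖∑ j ∈ Finset.range n, (z t)^(j+1)‖ ≤ 2 / s := by
      have hzt1 : z t ≠ 1 := by
        intro h; apply hz1 t; rw [h]; ring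
      have hgs : ∑ j ∈ Finset.range n, (z t)^(j+1) = z t * (((z t)^n - 1) / (z t - 1)) := by
        rw [← geom_sum_eq hzt1, Finset.mul_sum]
        apply Finset.sum_congr rfl
        intro j _; rw [← pow_succ']
      rw [hgs]
      have hzn : ‖z t‖ = t := hznorm t ht0.le
      have hn1 : ‖(z t)^n - 1‖ ≤ 2 := by
        calc ‖(z t)^n - 1‖ ≤ ‖(z t)^n‖ + ‖(1:ℂ)‖ := norm_sub_le _ _
        _ ≤ 1 + 1 := by
            rw [norm_pow, hzn, norm_one]
            have : t^n ≤ 1 := pow_le_one₀ ht0.le ht1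
            linarith
        _ = 2 := by norm_num
      have hd1 : ‖z t - 1‖ = ‖1 - z t‖ := by rw [norm_sub_rev]
      rw [norm_mul, norm_div, hd1, hzn]
      calc t * (‖(z t)^n - 1‖ / ‖1 - z t‖) ≤ 1 * (2 / s) := by
            apply mul_le_mul ht1 (div_le_div₀ (by norm_num) hn1 hs0 hnz) (by positivity)
              (by norm_num)
        _ = 2 / s := by ring
    rw [hfz]
    rw [norm_mul, Real.norm_eq_abs, abs_neg, abs_of_nonneg ht0.le]
    calc t * ‖(∑ j ∈ Finset.range n, (z t)^(j+1)).re‖ ≤ 1 * (2/s) := by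
          apply mul_le_mul ht1 _ (norm_nonneg _) (by norm_num)
          exact (Complex.abs_re_le_norm _).trans hsumz
      _ = 2/s := by ring
  -- dominated convergence
  have hFcont : ContinuousOn F (Set.Icc (0:ℝ) 1) := by
    apply ContinuousOn.div (by fun_prop) (by fun_prop)
    exact fun t _ => (hden t).ne'
  have hFint : Tendsto (fun n => ∫ t in (0:ℝ)..1, f n t) atTop
      (𝓝 (∫ t in (0:ℝ)..1, F t)) := by
    apply intervalIntegral.tendsto_integral_filter_of_dominated_convergence (fun _ => 2/s)
    · refine Eventually.of_forall fun n => Continuous.aestronglyMeasurable ?_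
      rw [hf]; fun_prop
    · exact Eventually.of_forall fun n => ae_of_all _ fun t ht => hbound n t ht
    · exact intervalIntegrable_const
    · have h1 : ∀ᵐ (t : ℝ), t ≠ 1 := by
        refine ae_iff.mpr ?_
        simpa [not_not, Set.setOf_eq_eq_singleton] using measure_singleton (1:ℝ)
      filter_upwards [h1] with t ht1 htmem
      rw [Set.uIoc_of_le (by norm_num : (0:ℝ) ≤ 1)] at htmem
      exact hlim t ⟨htmem.1, lt_of_le_of_ne htmem.2 ht1⟩
  -- identify S
  have hSF : S = ∫ t in (0:ℝ)..1, F t := by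
    refine tendsto_nhds_unique ?_ hFint
    have heq : (fun n => ∑ k ∈ Finset.range n,
        (-1:ℝ)^((k+1)+1) * Real.cos ((k+1) * φ) / ((k+1) + 2))
        = fun n => ∫ t in (0:ℝ)..1, f n t := funext hSn
    rw [← heq]
    exact hS
  rw [hSF, ← integral_G]
  apply intervalIntegral.integral_lt_integral_of_continuousOn_of_le_of_exists_lt
    (by norm_num : (0:ℝ) < 1) hFcont
  · apply ContinuousOn.div (by fun_prop) (by fun_prop)
    intro t ht
    have := ht.1
    intro h; simp only [Set.mem_Icc] at ht; linarith [ht.1]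
  · intro t ht
    obtain ⟨ht0, ht1⟩ := ht
    simp only [hF, hG]
    rw [div_le_div_iff₀ (hden t) (by linarith : (0:ℝ) < 1 + t)]
    nlinarith [mul_nonneg (mul_nonneg (sq_nonneg t) (by linarith : (0:ℝ) ≤ 1 - t))
      (by linarith : (0:ℝ) ≤ 1 - c)]
  · refine ⟨1/2, by norm_num, ?_⟩
    simp only [hF, hG]
    rw [div_lt_div_iff₀ (hden (1/2)) (by norm_num : (0:ℝ) < 1 + 1/2)]
    nlinarith
end
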